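/- Let G = (V, E, w) be a finite directed graph with edge weights in {−1, 0, +1}. Construct the graph G₁ as follows: start from the vertex set V; for every vertex u that has at least one outgoing edge of weight 0, add a new vertex u′ and an edge (u, u′) of weight +1; then, for every edge (u, v) ∈ E of weight 0, remove it and add the edge (u′, v) of weight −1; all edges of G of weight +1 or −1 are kept unchanged. Then for every pair of vertices u, v ∈ V, there exists a Dyck path from u to v in G if and only if there exists a Dyck path from u to v in G₁. -/

import Mathlib

/-- `IsWalk E u k`: the sequence `u 0, u 1, …, u k` is a walk in the directed
graph with edge relation `E`. -/
def IsWalk {V : Type*} (E : V → V → Prop) (u : ℕ → V) (k : ℕ) : Prop :=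
  ∀ i < k, E (u i) (u (i + 1))

/-- The total weight of the walk `u 0, …, u k`. -/
def walkWeight {V : Type*} (w : V → V → ℤ) (u : ℕ → V) (k : ℕ) : ℤ :=
  ∑ i ∈ Finset.range k, w (u i) (u (i + 1))

/-- `NonnegPrefix w u k`: every prefix sum of the walk `u 0, …, u k` is nonnegative. -/
def NonnegPrefix {V : Type*} (w : V → V → ℤ) (u : ℕ → V) (k : ℕ) : Prop :=
  ∀ i ≤ k, 0 ≤ walkWeight w u i

/-- A Dyck path from `s` to `t`: a nonnegative prefix path of total weight zero. -/
def DyckPath {V : Type*} (E : V → V → Prop) (w : V → V → ℤ) (s t : V) : Prop :=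
  ∃ (u : ℕ → V) (k : ℕ), u 0 = s ∧ u k = t ∧ IsWalk E u k ∧ NonnegPrefix w u k ∧
    walkWeight w u k = 0

/-- The edge relation of the graph `G₁`: the vertex set is `V ⊕ V`, where `Sum.inl u`
is the original vertex `u` and `Sum.inr u` is the auxiliary vertex `u′` (which has
edges exactly when `u` has an outgoing edge of weight `0`).  Edges of weight `±1`
of `G` are kept, each zero-weight edge `(u, v)` is replaced by `(u, u′)` (weight `+1`)
followed by `(u′, v)` (weight `-1`). -/
def E1 {V : Type*} (E : V → V → Prop) (w : V → V → ℤ) : V ⊕ V → V ⊕ V → Prop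
  | Sum.inl u, Sum.inl v => E u v ∧ w u v ≠ 0
  | Sum.inl u, Sum.inr x => u = x ∧ ∃ v, E u v ∧ w u v = 0
  | Sum.inr x, Sum.inl v => E x v ∧ w x v = 0
  | Sum.inr _, Sum.inr _ => False

/-- The weight function of the graph `G₁`. -/
def w1 {V : Type*} (w : V → V → ℤ) : V ⊕ V → V ⊕ V → ℤ
  | Sum.inl u, Sum.inl v => w u v
  | Sum.inl _, Sum.inr _ => 1
  | Sum.inr _, Sum.inl _ => -1
  | Sum.inr _, Sum.inr _ => 0

section Aux

variable {V : Type*}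

/-- Append a vertex `x` after position `k`. -/
def snoc (u : ℕ → V) (k : ℕ) (x : V) : ℕ → V := fun i => if i ≤ k then u i else x

lemma snoc_of_le (u : ℕ → V) (k : ℕ) (x : V) {i : ℕ} (h : i ≤ k) : snoc u k x i = u i :=
  if_pos h

lemma snoc_last (u : ℕ → V) (k : ℕ) (x : V) : snoc u k x (k + 1) = x :=
  if_neg (by omega)

lemma walkWeight_succ (w : V → V → ℤ) (u : ℕ → V) (k : ℕ) :
    walkWeight w u (k + 1) = walkWeight w u k + w (u k) (u (k + 1)) :=
  Finset.sum_range_succ _ _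

lemma walkWeight_snoc_of_le (w : V → V → ℤ) (u : ℕ → V) (k : ℕ) (x : V) {i : ℕ}
    (h : i ≤ k) : walkWeight w (snoc u k x) i = walkWeight w u i := by
  unfold walkWeight
  refine Finset.sum_congr rfl fun j hj => ?_
  rw [Finset.mem_range] at hj
  rw [snoc_of_le u k x (by omega), snoc_of_le u k x (by omega)]

lemma walkWeight_snoc_succ (w : V → V → ℤ) (u : ℕ → V) (k : ℕ) (x : V) :
    walkWeight w (snoc u k x) (k + 1) = walkWeight w u k + w (u k) x := by
  rw [walkWeight_succ, walkWeight_snoc_of_le w u k x le_rfl,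
    snoc_of_le u k x le_rfl, snoc_last]

lemma isWalk_snoc {E : V → V → Prop} {u : ℕ → V} {k : ℕ} {x : V}
    (hW : IsWalk E u k) (hE : E (u k) x) : IsWalk E (snoc u k x) (k + 1) := by
  intro i hi
  rcases Nat.lt_or_ge i k with h | h
  · rw [snoc_of_le u k x (by omega), snoc_of_le u k x (by omega)]
    exact hW i h
  · have hik : i = k := by omega
    rw [hik, snoc_of_le u k x le_rfl, snoc_last]
    exact hE

lemma nonnegPrefix_snoc {w : V → V → ℤ} {u : ℕ → V} {k : ℕ} {x : V}
    (hP : NonnegPrefix w u k) (h : 0 ≤ walkWeight w u k + w (u k) x) :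
    NonnegPrefix w (snoc u k x) (k + 1) := by
  intro i hi
  rcases Nat.lt_or_ge i (k + 1) with h' | h'
  · rw [walkWeight_snoc_of_le w u k x (by omega)]
    exact hP i (by omega)
  · have : i = k + 1 := by omega
    subst this
    rw [walkWeight_snoc_succ]
    exact h

lemma isWalk_of_le {E : V → V → Prop} {u : ℕ → V} {k : ℕ}
    (hW : IsWalk E u k) {j : ℕ} (h : j ≤ k) : IsWalk E u j :=
  fun i hi => hW i (by omega)

lemma nonnegPrefix_of_le {w : V → V → ℤ} {u : ℕ → V} {k : ℕ}
    (hP : NonnegPrefix w u k) {j : ℕ} (h : j ≤ k) : NonnegPrefix w u j :=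
  fun i hi => hP i (by omega)

lemma forward_walk (E : V → V → Prop) (w : V → V → ℤ) (u : ℕ → V) (k : ℕ)
    (hW : IsWalk E u k) (hP : NonnegPrefix w u k) :
    ∃ (u' : ℕ → V ⊕ V) (k' : ℕ), u' 0 = Sum.inl (u 0) ∧ u' k' = Sum.inl (u k) ∧
      IsWalk (E1 E w) u' k' ∧ NonnegPrefix (w1 w) u' k' ∧
      walkWeight (w1 w) u' k' = walkWeight w u k := by
  induction k with
  | zero =>
    refine ⟨fun _ => Sum.inl (u 0), 0, rfl, rfl, fun i hi => by omega, ?_, rfl⟩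
    intro i hi
    have : i = 0 := by omega
    subst this
    simp [walkWeight]
  | succ n ih =>
    obtain ⟨u', k', h0, hk, hW', hP', hwt⟩ :=
      ih (isWalk_of_le hW (by omega)) (nonnegPrefix_of_le hP (by omega))
    have hE : E (u n) (u (n + 1)) := hW n (by omega)
    by_cases hz : w (u n) (u (n + 1)) = 0
    · -- split: go through the auxiliary vertex
      refine ⟨snoc (snoc u' k' (Sum.inr (u n))) (k' + 1) (Sum.inl (u (n + 1))), k' + 2,
        ?_, ?_, ?_, ?_, ?_⟩
      · rw [snoc_of_le _ _ _ (by omega), snoc_of_le _ _ _ (by omega)]; exact h0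
      · exact snoc_last _ _ _
      · refine isWalk_snoc (isWalk_snoc hW' ?_) ?_
        · rw [hk]; exact ⟨rfl, u (n + 1), hE, hz⟩
        · rw [snoc_last]; exact ⟨hE, hz⟩
      · refine nonnegPrefix_snoc (nonnegPrefix_snoc hP' ?_) ?_
        · rw [hk]
          have := hP n (by omega)
          show (0 : ℤ) ≤ walkWeight (w1 w) u' k' + 1
          omega
        · rw [walkWeight_snoc_succ, hk, snoc_last]
          have := hP n (by omega)
          show (0 : ℤ) ≤ walkWeight (w1 w) u' k' + 1 + -1
          omega
      · rw [walkWeight_snoc_succ, walkWeight_snoc_succ, hk, snoc_last,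
          walkWeight_succ, hz, hwt]
        show walkWeight w u n + 1 + -1 = walkWeight w u n + 0
        ring
    · -- keep the edge
      refine ⟨snoc u' k' (Sum.inl (u (n + 1))), k' + 1, ?_, snoc_last _ _ _, ?_, ?_, ?_⟩
      · rw [snoc_of_le _ _ _ (by omega)]; exact h0
      · refine isWalk_snoc hW' ?_
        rw [hk]; exact ⟨hE, hz⟩
      · refine nonnegPrefix_snoc hP' ?_
        rw [hk]
        show (0 : ℤ) ≤ walkWeight (w1 w) u' k' + w (u n) (u (n + 1))
        rw [hwt, ← walkWeight_succ]
        exact hP (n + 1) le_rfl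
      · rw [walkWeight_snoc_succ, hk, walkWeight_succ, hwt]
        rfl

lemma backward_walk (E : V → V → Prop) (w : V → V → ℤ) :
    ∀ (k' : ℕ) (u' : ℕ → V ⊕ V) (s t : V), u' 0 = Sum.inl s → u' k' = Sum.inl t →
      IsWalk (E1 E w) u' k' → NonnegPrefix (w1 w) u' k' →
      ∃ (v : ℕ → V) (k : ℕ), v 0 = s ∧ v k = t ∧ IsWalk E v k ∧ NonnegPrefix w v k ∧
        walkWeight w v k = walkWeight (w1 w) u' k' := by
  intro k'
  induction k' using Nat.strong_induction_on with
  | _ k' ih =>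
    intro u' s t h0 hk hW hP
    match k' with
    | 0 =>
      have hst : s = t := Sum.inl_injective (h0.symm.trans hk)
      refine ⟨fun _ => s, 0, rfl, hst, fun i hi => by omega, ?_, by simp [walkWeight]⟩
      intro i hi
      have : i = 0 := by omega
      subst this
      simp [walkWeight]
    | n + 1 =>
      have hEn : E1 E w (u' n) (u' (n + 1)) := hW n (by omega)
      cases hcase : u' n with
      | inl x =>
        rw [hcase, hk] at hEn
        obtain ⟨hExt, hwne⟩ := hEn
        obtain ⟨v, k, hv0, hvk, hvW, hvP, hvwt⟩ := ih n (by omega) u' s x h0 hcase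
          (isWalk_of_le hW (by omega)) (nonnegPrefix_of_le hP (by omega))
        refine ⟨snoc v k t, k + 1, ?_, snoc_last _ _ _, ?_, ?_, ?_⟩
        · rw [snoc_of_le _ _ _ (by omega)]; exact hv0
        · exact isWalk_snoc hvW (by rw [hvk]; exact hExt)
        · refine nonnegPrefix_snoc hvP ?_
          rw [hvk, hvwt]
          have h1 := hP (n + 1) le_rfl
          rw [walkWeight_succ, hcase, hk] at h1
          exact h1
        · rw [walkWeight_snoc_succ, hvk, hvwt, walkWeight_succ, hcase, hk]
          rfl
      | inr x =>
        -- u' n = inr x; then n ≥ 1 and u' (n-1) = inl x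
        have hn : 1 ≤ n := by
          rcases Nat.eq_zero_or_pos n with h | h
          · exfalso; rw [h, h0] at hcase; exact Sum.inl_ne_inr hcase
          · exact h
        obtain ⟨m, rfl⟩ : ∃ m, n = m + 1 := ⟨n - 1, by omega⟩
        have hEm : E1 E w (u' m) (u' (m + 1)) := hW m (by omega)
        rw [hcase] at hEm
        have hum : u' m = Sum.inl x := by
          cases hm : u' m with
          | inl y =>
            rw [hm] at hEm
            rw [hEm.1]
          | inr y => rw [hm] at hEm; exact absurd hEm id
        rw [hcase, hk] at hEn
        obtain ⟨hExt, hwz⟩ := hEn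
        obtain ⟨v, k, hv0, hvk, hvW, hvP, hvwt⟩ := ih m (by omega) u' s x h0 hum
          (isWalk_of_le hW (by omega)) (nonnegPrefix_of_le hP (by omega))
        have hwt2 : walkWeight (w1 w) u' (m + 2) = walkWeight (w1 w) u' m := by
          rw [walkWeight_succ, walkWeight_succ, hum, hcase, hk]
          show walkWeight (w1 w) u' m + 1 + -1 = walkWeight (w1 w) u' m
          ring
        refine ⟨snoc v k t, k + 1, ?_, snoc_last _ _ _, ?_, ?_, ?_⟩
        · rw [snoc_of_le _ _ _ (by omega)]; exact hv0
        · exact isWalk_snoc hvW (by rw [hvk]; exact hExt)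
        · refine nonnegPrefix_snoc hvP ?_
          rw [hvk, hwz, hvwt, add_zero, ← hwt2]
          exact hP (m + 2) le_rfl
        · rw [walkWeight_snoc_succ, hvk, hwz, hvwt, add_zero, hwt2]

end Aux

/-- For a finite graph `G` with weights in `{-1, 0, +1}` and the
graph `G₁` obtained by splitting every zero-weight edge into a `+1` edge and a `-1`
edge through an auxiliary vertex, Dyck reachability between original vertices is the
same in `G` and `G₁`. -/
theorem dyck_iff_dyck_in_G1 {V : Type*} [Fintype V]
    (E : V → V → Prop) (w : V → V → ℤ)
    (hw : ∀ a b, E a b → w a b = -1 ∨ w a b = 0 ∨ w a b = 1) :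
    ∀ u v : V, DyckPath E w u v ↔ DyckPath (E1 E w) (w1 w) (Sum.inl u) (Sum.inl v) := by
  intro u v
  constructor
  · rintro ⟨p, k, h0, hk, hW, hP, hwt⟩
    obtain ⟨u', k', h0', hk', hW', hP', hwt'⟩ := forward_walk E w p k hW hP
    exact ⟨u', k', by rw [h0', h0], by rw [hk', hk], hW', hP', by rw [hwt', hwt]⟩
  · rintro ⟨u', k', h0', hk', hW', hP', hwt'⟩
    obtain ⟨p, k, h0, hk, hW, hP, hwt⟩ :=
      backward_walk E w k' u' u v h0' hk' hW' hP'
    exact ⟨p, k, h0, hk, hW, hP, by rw [hwt, hwt']⟩
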